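/- For all n ∈ ℕ, 5·F_{(2n)²} ≥ n · 5·F_{n²}, i.e. the sequence φ_n = 5·F_{n²} satisfies φ_{2n} ≥ n·φ_n. -/

import Mathlib

lemma fib_two_pow (k m : ℕ) : 2 ^ k * Nat.fib m ≤ Nat.fib (m + 2 * k) := by
  induction k with
  | zero => simp
  | succ k ih =>
    have h1 : m + 2 * (k + 1) = (m + 2 * k) + 2 := by ring
    rw [h1, Nat.fib_add_two]
    have h2 : Nat.fib (m + 2 * k) ≤ Nat.fib (m + 2 * k + 1) := Nat.fib_mono (by omega)
    calc 2 ^ (k + 1) * Nat.fib m = 2 * (2 ^ k * Nat.fib m) := by ring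
    _ ≤ 2 * Nat.fib (m + 2 * k) := by omega
    _ ≤ _ := by omega

theorem five_fib_sq_growth (n : ℕ) (hn : 0 < n) :
    n * (5 * Nat.fib (n ^ 2)) ≤ 5 * Nat.fib ((2 * n) ^ 2) := by
  have hn2 : n ≤ 2 ^ (n ^ 2) := by
    calc n ≤ 2 ^ n := (Nat.lt_two_pow_self (n := n)).le
    _ ≤ 2 ^ (n ^ 2) := Nat.pow_le_pow_right (by norm_num) (by nlinarith)
  have h1 : 2 ^ (n ^ 2) * Nat.fib (n ^ 2) ≤ Nat.fib (n ^ 2 + 2 * n ^ 2) :=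
    fib_two_pow (n ^ 2) (n ^ 2)
  have h2 : Nat.fib (n ^ 2 + 2 * n ^ 2) ≤ Nat.fib ((2 * n) ^ 2) :=
    Nat.fib_mono (by nlinarith)
  have h3 : n * Nat.fib (n ^ 2) ≤ 2 ^ (n ^ 2) * Nat.fib (n ^ 2) :=
    Nat.mul_le_mul_right _ hn2
  nlinarith
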